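/- Let T ≥ 3, let g₁,…,g_T ∈ H with ‖g_t‖ ≤ L, and let K ⊆ H be closed convex with diameter at most D. Run Online Frank–Wolfe (Algorithm: dir_t = η∑_{s≤t}g_s + (x_t − x₁), v_t = argmin_{v∈K}⟨dir_t, v⟩, x_{t+1} = (1−σ)x_t + σv_t) and FTRL (y_{t+1} = argmin_{y∈K} η⟨∑_{s≤t}g_s, y⟩ + (1/2)‖y − x₁‖²) with y₁ = x₁ ∈ K, η = (D/(2L))(3/T)^{3/4}, σ = min(1,√(3/T)). Define φ_t = ∑_{s=1}^t ⟨g_s, x_s − y_{t+1}⟩ + (1/(6η))‖x_{t+1} − y_{t+1}‖² − (1/(2η))‖y_{t+1} − x₁‖². Then for each 1 ≤ t ≤ T: φ_t − φ_{t−1} ≤ (2D/(L·3^{3/4}·T^{1/4}))‖g_t‖² + (L/(D·3^{3/4}·T^{1/4}))‖x_t − v_t‖². -/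
import Mathlib

set_option maxHeartbeats 1000000

open RealInnerProductSpace Finset

lemma ofw_scalar_aux (η σ γ w p q : ℝ) (hη : 0 < η) (hσ : 0 < σ) (hσ1 : σ ≤ 1)
    (hγ : 0 ≤ γ) (hw : 0 ≤ w) (hp : 0 ≤ p) (hq0 : 0 ≤ q) (hq : q ≤ η*γ) (hwpq : w ≤ p + q) :
    γ*w - q^2/(2*η) + ((1-2*σ)*w^2 - p^2)/(6*η) ≤ 4*η/(3*σ)*γ^2 := by
  have h6 : (0:ℝ) < 6*η*σ := by positivity
  have key : σ*(6*η*(γ*w) - 3*q^2 + ((1-2*σ)*w^2 - p^2)) ≤ 8*η^2*γ^2 := by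
    rcases le_total q w with hqw | hwq
    · have hp2 : (w-q)^2 ≤ p^2 := by nlinarith
      nlinarith [sq_nonneg (σ*w - 2*η*γ), mul_nonneg hσ.le (sub_nonneg.2 hp2),
        mul_nonneg (mul_nonneg hσ.le hw) (sub_nonneg.2 hq),
        mul_nonneg hσ.le (sq_nonneg q)]
    · nlinarith [mul_nonneg hσ.le (sq_nonneg (2*q - 3*η*γ)),
        mul_nonneg (sub_nonneg.2 hσ1) (sq_nonneg (η*γ)),
        mul_nonneg hσ.le (sq_nonneg p),
        mul_nonneg (mul_nonneg hσ.le (mul_nonneg hη.le hγ)) (sub_nonneg.2 hwq),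
        mul_nonneg hσ.le (mul_nonneg (add_nonneg hq0 hw) (sub_nonneg.2 hwq)),
        mul_nonneg (mul_nonneg hσ.le hσ.le) (sq_nonneg w)]
  have e1 : γ*w - q^2/(2*η) + ((1-2*σ)*w^2 - p^2)/(6*η)
      = (σ*(6*η*(γ*w) - 3*q^2 + ((1-2*σ)*w^2 - p^2)))/(6*η*σ) := by
    field_simp; ring
  have e2 : 4*η/(3*σ)*γ^2 = (8*η^2*γ^2)/(6*η*σ) := by
    field_simp; ring
  rw [e1, e2]
  exact (div_le_div_iff_of_pos_right h6).mpr key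

lemma ofw_vi_aux {H : Type*} [NormedAddCommGroup H] [InnerProductSpace ℝ H]
    {K : Set H} (hK : Convex ℝ K) {c x₀ yy : H} (hy : yy ∈ K)
    (hmin : ∀ z ∈ K, ⟪c, yy⟫ + (1/2)*‖yy - x₀‖^2 ≤ ⟪c, z⟫ + (1/2)*‖z - x₀‖^2)
    {z : H} (hz : z ∈ K) : 0 ≤ ⟪c + (yy - x₀), z - yy⟫ := by
  set A : ℝ := ⟪c + (yy - x₀), z - yy⟫ with hA
  set B : ℝ := ‖z - yy‖^2 with hB
  have hBnn : 0 ≤ B := by positivity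
  by_contra hneg
  push_neg at hneg
  set lam : ℝ := min 1 ((-A)/(2*(B+1))) with hlam
  have hlam0 : 0 < lam := lt_min one_pos (div_pos (neg_pos.2 hneg) (by positivity))
  have hlam1 : lam ≤ 1 := min_le_left _ _
  have hlam2 : lam ≤ (-A)/(2*(B+1)) := min_le_right _ _
  have hmem : yy + lam • (z - yy) ∈ K := by
    have h := hK hy hz (by linarith : (0:ℝ) ≤ 1 - lam) hlam0.le (by ring)
    have : (1-lam) • yy + lam • z = yy + lam • (z - yy) := by
      rw [smul_sub, sub_smul, one_smul]; abel
    rwa [this] at h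
  have key := hmin _ hmem
  have exp1 : ⟪c, yy + lam • (z - yy)⟫ = ⟪c, yy⟫ + lam * ⟪c, z - yy⟫ := by
    rw [inner_add_right, real_inner_smul_right]
  have hrw : (yy + lam • (z - yy)) - x₀ = (yy - x₀) + lam • (z - yy) := by abel
  have exp2 : ‖(yy + lam • (z - yy)) - x₀‖^2
      = ‖yy - x₀‖^2 + 2*(lam * ⟪yy - x₀, z - yy⟫) + lam^2 * ‖z - yy‖^2 := by
    rw [hrw, norm_add_sq_real, real_inner_smul_right, norm_smul, Real.norm_eq_abs,
      mul_pow, sq_abs]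
  have hAeq : A = ⟪c, z - yy⟫ + ⟪yy - x₀, z - yy⟫ := by
    rw [hA, inner_add_left]
  have hkey : 0 ≤ lam * A + lam^2/2 * B := by
    rw [hAeq]; nlinarith [key, exp1, exp2]
  have h2 : 0 ≤ A + lam/2 * B :=
    (mul_nonneg_iff_of_pos_left hlam0).mp (by nlinarith [hkey] : 0 ≤ lam * (A + lam/2*B))
  have hle : lam * (2*(B+1)) ≤ -A := (le_div_iff₀ (by positivity)).mp hlam2
  nlinarith [mul_nonneg hlam0.le hBnn]

theorem ofw_potential_difference_bound
    {H : Type*} [NormedAddCommGroup H] [InnerProductSpace ℝ H] [CompleteSpace H]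
    (K : Set H) (hKne : K.Nonempty) (hKcl : IsClosed K) (hKcv : Convex ℝ K)
    (D L : ℝ) (hD : 0 < D) (hL : 0 < L)
    (hdiam : ∀ u ∈ K, ∀ w ∈ K, ‖u - w‖ ≤ D)
    (T : ℕ) (hT : 3 ≤ T)
    (g : ℕ → H) (hg : ∀ t ∈ Finset.Icc 1 T, ‖g t‖ ≤ L)
    (η σ : ℝ)
    (hη : η = (D / (2 * L)) * ((3:ℝ) / T) ^ ((3:ℝ)/4))
    (hσ : σ = min 1 (Real.sqrt ((3:ℝ) / T)))
    (x v y : ℕ → H)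
    (hx1 : x 1 ∈ K) (hy1 : y 1 = x 1)
    (hvK : ∀ t ∈ Finset.Icc 1 T, v t ∈ K)
    (hvmin : ∀ t ∈ Finset.Icc 1 T, ∀ u ∈ K,
      ⟪η • (∑ s ∈ Finset.Icc 1 t, g s) + (x t - x 1), v t⟫
        ≤ ⟪η • (∑ s ∈ Finset.Icc 1 t, g s) + (x t - x 1), u⟫)
    (hxstep : ∀ t ∈ Finset.Icc 1 T, x (t+1) = (1 - σ) • x t + σ • v t)
    (hyK : ∀ t ∈ Finset.Icc 1 T, y (t+1) ∈ K)
    (hymin : ∀ t ∈ Finset.Icc 1 T, ∀ z ∈ K,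
      η * ⟪∑ s ∈ Finset.Icc 1 t, g s, y (t+1)⟫ + (1/2) * ‖y (t+1) - x 1‖^2
        ≤ η * ⟪∑ s ∈ Finset.Icc 1 t, g s, z⟫ + (1/2) * ‖z - x 1‖^2)
    (φ : ℕ → ℝ)
    (hφ : ∀ t ≤ T, φ t = ∑ s ∈ Finset.Icc 1 t, ⟪g s, x s - y (t+1)⟫
            + (1/(6*η)) * ‖x (t+1) - y (t+1)‖^2
            - (1/(2*η)) * ‖y (t+1) - x 1‖^2) :
    ∀ t ∈ Finset.Icc 1 T,
      φ t - φ (t-1)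
        ≤ (2 * D / (L * (3:ℝ) ^ ((3:ℝ)/4) * (T:ℝ) ^ ((1:ℝ)/4))) * ‖g t‖^2
          + (L / (D * (3:ℝ) ^ ((3:ℝ)/4) * (T:ℝ) ^ ((1:ℝ)/4))) * ‖x t - v t‖^2 := by
  -- basic facts about the constants
  have hT3 : (3:ℝ) ≤ (T:ℝ) := by exact_mod_cast hT
  have hTpos : (0:ℝ) < (T:ℝ) := by linarith
  set ρ : ℝ := ((3:ℝ)/(T:ℝ)) ^ ((1:ℝ)/4) with hρdef
  have h3T : (0:ℝ) < (3:ℝ)/(T:ℝ) := by positivity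
  have h3T1 : (3:ℝ)/(T:ℝ) ≤ 1 := by
    rw [div_le_one hTpos]; exact hT3
  have hρpos : 0 < ρ := Real.rpow_pos_of_pos h3T _
  have hρ1 : ρ ≤ 1 := Real.rpow_le_one h3T.le h3T1 (by norm_num)
  have hσρ : σ = ρ^2 := by
    have hs1 : Real.sqrt ((3:ℝ)/(T:ℝ)) ≤ 1 := Real.sqrt_le_one.mpr h3T1
    have h1 : σ = Real.sqrt ((3:ℝ)/(T:ℝ)) := by rw [hσ, min_eq_right hs1]
    rw [h1, Real.sqrt_eq_rpow, hρdef, ← Real.rpow_natCast (((3:ℝ)/(T:ℝ)) ^ ((1:ℝ)/4)) 2,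
      ← Real.rpow_mul h3T.le]
    norm_num
  have hηρ : η = D/(2*L) * ρ^3 := by
    rw [hη, hρdef, ← Real.rpow_natCast (((3:ℝ)/(T:ℝ)) ^ ((1:ℝ)/4)) 3,
      ← Real.rpow_mul h3T.le]
    norm_num
  have hηpos : 0 < η := by rw [hηρ]; positivity
  have hσpos : 0 < σ := by rw [hσρ]; positivity
  have hσ1 : σ ≤ 1 := by rw [hσρ]; nlinarith
  have hTne : (T:ℝ) ^ ((1:ℝ)/4) ≠ 0 := ne_of_gt (Real.rpow_pos_of_pos hTpos _)
  have h3Tρ : (3:ℝ) ^ ((3:ℝ)/4) * (T:ℝ) ^ ((1:ℝ)/4) * ρ = 3 := by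
    have hdiv : ρ = (3:ℝ) ^ ((1:ℝ)/4) / (T:ℝ) ^ ((1:ℝ)/4) := by
      rw [hρdef, Real.div_rpow (by norm_num) (le_of_lt hTpos)]
    rw [hdiv, show (3:ℝ)^((3:ℝ)/4) * (T:ℝ)^((1:ℝ)/4) * ((3:ℝ)^((1:ℝ)/4) / (T:ℝ)^((1:ℝ)/4))
        = ((3:ℝ)^((3:ℝ)/4) * (3:ℝ)^((1:ℝ)/4)) * ((T:ℝ)^((1:ℝ)/4)/(T:ℝ)^((1:ℝ)/4)) from by ring,
      div_self hTne, mul_one, ← Real.rpow_add (by norm_num : (0:ℝ) < 3)]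
    norm_num
  have hprod : (3:ℝ) ^ ((3:ℝ)/4) * (T:ℝ) ^ ((1:ℝ)/4) = 3/ρ := by
    rw [eq_div_iff (ne_of_gt hρpos)]; exact h3Tρ
  have hC1 : 2 * D / (L * (3:ℝ) ^ ((3:ℝ)/4) * (T:ℝ) ^ ((1:ℝ)/4)) = 4*η/(3*σ) := by
    rw [mul_assoc, hprod, hηρ, hσρ]
    field_simp
    ring
  have hC2 : L / (D * (3:ℝ) ^ ((3:ℝ)/4) * (T:ℝ) ^ ((1:ℝ)/4)) = σ^2/(6*η) := by
    rw [mul_assoc, hprod, hηρ, hσρ]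
    field_simp
    ring
  -- the OFW iterates stay in K
  have hxK : ∀ s : ℕ, s ≤ T → x (s+1) ∈ K := by
    intro s
    induction s with
    | zero => intro _; exact hx1
    | succ n ih =>
      intro h
      rw [hxstep (n+1) (Finset.mem_Icc.mpr ⟨Nat.le_add_left 1 n, h⟩)]
      exact hKcv (ih (by omega)) (hvK (n+1) (Finset.mem_Icc.mpr ⟨Nat.le_add_left 1 n, h⟩))
        (by linarith) hσpos.le (by ring)
  intro t ht
  obtain ⟨ht1, htT⟩ := Finset.mem_Icc.mp ht
  obtain ⟨t', rfl⟩ : ∃ u, t = u + 1 := ⟨t - 1, by omega⟩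
  -- abbreviations
  set X : H := x (t'+1) with hX
  set X' : H := x (t'+1+1) with hX'
  set Y1 : H := y (t'+1) with hY1
  set Y2 : H := y (t'+1+1) with hY2
  set V : H := v (t'+1) with hV
  set Gp : H := ∑ s ∈ Finset.Icc 1 t', g s with hGp
  set G : H := ∑ s ∈ Finset.Icc 1 (t'+1), g s with hG
  have hGsplit : G = Gp + g (t'+1) := by
    rw [hG, hGp, Finset.sum_Icc_succ_top (Nat.le_add_left 1 t')]
  have hXK : X ∈ K := hxK t' (by omega)
  have hVK : V ∈ K := hvK (t'+1) ht
  have hY2K : Y2 ∈ K := hyK (t'+1) ht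
  have hY1K : Y1 ∈ K := by
    rcases Nat.eq_zero_or_pos t' with h0 | h0
    · have : Y1 = x 1 := by rw [hY1, h0]; exact hy1
      rw [this]; exact hx1
    · exact hyK t' (Finset.mem_Icc.mpr ⟨h0, by omega⟩)
  -- minimality of the FTRL iterates, in inner-product form
  have hY1min : ∀ z ∈ K, ⟪η • Gp, Y1⟫ + (1/2)*‖Y1 - x 1‖^2
      ≤ ⟪η • Gp, z⟫ + (1/2)*‖z - x 1‖^2 := by
    intro z hz
    rcases Nat.eq_zero_or_pos t' with h0 | h0
    · have hGp0 : Gp = 0 := by rw [hGp, h0]; simp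
      have hY1x : Y1 = x 1 := by rw [hY1, h0]; exact hy1
      rw [hGp0, smul_zero, inner_zero_left, inner_zero_left, hY1x]
      simp only [sub_self, norm_zero]
      nlinarith [sq_nonneg ‖z - x 1‖]
    · rw [real_inner_smul_left, real_inner_smul_left, hGp, hY1]
      exact hymin t' (Finset.mem_Icc.mpr ⟨h0, by omega⟩) z hz
  have hY2min : ∀ z ∈ K, ⟪η • G, Y2⟫ + (1/2)*‖Y2 - x 1‖^2
      ≤ ⟪η • G, z⟫ + (1/2)*‖z - x 1‖^2 := by
    intro z hz
    rw [real_inner_smul_left, real_inner_smul_left, hG, hY2]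
    exact hymin (t'+1) ht z hz
  have VI1 : ∀ z ∈ K, 0 ≤ ⟪η • Gp + (Y1 - x 1), z - Y1⟫ :=
    fun z hz => ofw_vi_aux hKcv hY1K hY1min hz
  have VI2 : ∀ z ∈ K, 0 ≤ ⟪η • G + (Y2 - x 1), z - Y2⟫ :=
    fun z hz => ofw_vi_aux hKcv hY2K hY2min hz
  -- (A): ‖Y2 - Y1‖ ≤ η ‖g_t‖
  have hq_le : ‖Y2 - Y1‖ ≤ η * ‖g (t'+1)‖ := by
    have h1 := VI1 Y2 hY2K
    have h2 := VI2 Y1 hY1K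
    have e : ⟪η • Gp + (Y1 - x 1), Y2 - Y1⟫ + ⟪η • G + (Y2 - x 1), Y1 - Y2⟫
        = -(η * ⟪g (t'+1), Y2 - Y1⟫) - ‖Y2 - Y1‖^2 := by
      rw [hGsplit, show (Y1 - Y2 : H) = -(Y2 - Y1) from by abel,
        show (Y2 - x 1 : H) = (Y1 - x 1) + (Y2 - Y1) from by abel,
        ← real_inner_self_eq_norm_sq]
      simp only [smul_add, inner_add_left, inner_neg_right, real_inner_smul_left]
      ring
    have hsum : (0:ℝ) ≤ -(η * ⟪g (t'+1), Y2 - Y1⟫) - ‖Y2 - Y1‖^2 := by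
      rw [← e]; exact add_nonneg h1 h2
    have hcs : -(⟪g (t'+1), Y2 - Y1⟫) ≤ ‖g (t'+1)‖ * ‖Y2 - Y1‖ := by
      have h := real_inner_le_norm (g (t'+1)) (Y1 - Y2)
      rw [show (Y1 - Y2 : H) = -(Y2 - Y1) from by abel, inner_neg_right, norm_neg] at h
      linarith
    have hq2 : ‖Y2 - Y1‖^2 ≤ η * (‖g (t'+1)‖ * ‖Y2 - Y1‖) := by
      nlinarith [mul_le_mul_of_nonneg_left hcs hηpos.le]
    rcases eq_or_lt_of_le (norm_nonneg (Y2 - Y1)) with h0 | h0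
    · rw [← h0]; positivity
    · have h3 : ‖Y2 - Y1‖ * ‖Y2 - Y1‖ ≤ (η * ‖g (t'+1)‖) * ‖Y2 - Y1‖ := by nlinarith
      exact le_of_mul_le_mul_right h3 h0
  -- (C): the FW vertex and FTRL minimizer satisfy ⟪X - Y2, V - Y2⟫ ≤ 0
  have hc1 : ⟪X - Y2, V - Y2⟫ ≤ 0 := by
    have h1 := hvmin (t'+1) ht Y2 hY2K
    rw [← hG, ← hX, ← hV] at h1
    have h2 := VI2 V hVK
    have e : ⟪X - Y2, V - Y2⟫
        = (⟪η • G + (X - x 1), V⟫ - ⟪η • G + (X - x 1), Y2⟫)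
          - ⟪η • G + (Y2 - x 1), V - Y2⟫ := by
      rw [← inner_sub_right, ← inner_sub_left]
      congr 1
      abel
    rw [e]
    linarith
  -- (B2): quadratic expansion of the FW step
  have hB2 : ‖X' - Y2‖^2 ≤ (1-2*σ)*‖X - Y2‖^2 + σ^2*‖X - V‖^2 := by
    have hstep := hxstep (t'+1) ht
    rw [← hX', ← hX, ← hV] at hstep
    have hdecomp : X' - Y2 = (1-σ) • (X - Y2) + σ • (V - Y2) := by
      rw [hstep]
      module
    have e1 : ‖X' - Y2‖^2 = (1-σ)^2 * ‖X - Y2‖^2 + 2*((1-σ)*(σ*⟪X - Y2, V - Y2⟫))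
        + σ^2 * ‖V - Y2‖^2 := by
      rw [hdecomp, norm_add_sq_real, real_inner_smul_left, real_inner_smul_right,
        norm_smul, norm_smul, Real.norm_eq_abs, Real.norm_eq_abs, mul_pow, mul_pow,
        sq_abs, sq_abs]
    have e2 : ‖X - V‖^2 = ‖X - Y2‖^2 - 2*⟪X - Y2, V - Y2⟫ + ‖V - Y2‖^2 := by
      rw [show (X - V : H) = (X - Y2) - (V - Y2) from by abel, norm_sub_sq_real]
    nlinarith [mul_nonneg hσpos.le (neg_nonneg.mpr hc1), e1, e2]
  -- (B1): FTRL strong-convexity step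
  have hB1 : -⟪Gp, Y2 - Y1⟫ - (1/(2*η))*(‖Y2 - x 1‖^2 - ‖Y1 - x 1‖^2)
      ≤ -(‖Y2 - Y1‖^2/(2*η)) := by
    have base : 0 ≤ η*⟪Gp, Y2 - Y1⟫ + ⟪Y1 - x 1, Y2 - Y1⟫ := by
      have h1 := VI1 Y2 hY2K
      rwa [inner_add_left, real_inner_smul_left] at h1
    have idq : ‖Y2 - x 1‖^2 = ‖Y1 - x 1‖^2 + 2*⟪Y1 - x 1, Y2 - Y1⟫ + ‖Y2 - Y1‖^2 := by
      rw [show (Y2 - x 1 : H) = (Y1 - x 1) + (Y2 - Y1) from by abel, norm_add_sq_real]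
    have ediff : -(‖Y2 - Y1‖^2/(2*η))
        - (-⟪Gp, Y2 - Y1⟫ - (1/(2*η))*(‖Y2 - x 1‖^2 - ‖Y1 - x 1‖^2))
        = (1/η)*(η*⟪Gp, Y2 - Y1⟫ + ⟪Y1 - x 1, Y2 - Y1⟫) := by
      rw [idq]
      field_simp
      ring
    nlinarith [mul_nonneg (by positivity : (0:ℝ) ≤ 1/η) base, ediff]
  -- exact potential difference formula
  have EQphi : φ (t'+1) - φ t' = ⟪g (t'+1), X - Y2⟫ - ⟪Gp, Y2 - Y1⟫
      + (1/(6*η))*(‖X' - Y2‖^2 - ‖X - Y1‖^2)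
      - (1/(2*η))*(‖Y2 - x 1‖^2 - ‖Y1 - x 1‖^2) := by
    rw [hφ (t'+1) htT, hφ t' (by omega)]
    rw [← hX', ← hY2, ← hX, ← hY1]
    have hsum1 : ∑ s ∈ Finset.Icc 1 (t'+1), ⟪g s, x s - Y2⟫
        = ∑ s ∈ Finset.Icc 1 t', ⟪g s, x s - Y2⟫ + ⟪g (t'+1), X - Y2⟫ := by
      rw [Finset.sum_Icc_succ_top (Nat.le_add_left 1 t'), hX]
    have hterm : ∀ s ∈ Finset.Icc 1 t', ⟪g s, x s - Y2⟫ = ⟪g s, x s - Y1⟫ - ⟪g s, Y2 - Y1⟫ := by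
      intro s _
      rw [← inner_sub_right]
      congr 1
      abel
    have hsum2 : ∑ s ∈ Finset.Icc 1 t', ⟪g s, x s - Y2⟫
        = ∑ s ∈ Finset.Icc 1 t', ⟪g s, x s - Y1⟫ - ⟪Gp, Y2 - Y1⟫ := by
      rw [Finset.sum_congr rfl hterm, Finset.sum_sub_distrib, hGp, sum_inner]
    rw [hsum1, hsum2]
    ring
  -- assemble
  have main1 : φ (t'+1) - φ t' ≤ ⟪g (t'+1), X - Y2⟫ - ‖Y2 - Y1‖^2/(2*η)
      + (1/(6*η))*(‖X' - Y2‖^2 - ‖X - Y1‖^2) := by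
    rw [EQphi]; linarith [hB1]
  have hD1 : ⟪g (t'+1), X - Y2⟫ ≤ ‖g (t'+1)‖ * ‖X - Y2‖ := real_inner_le_norm _ _
  have hE : ‖X - Y2‖ ≤ ‖X - Y1‖ + ‖Y2 - Y1‖ := by
    rw [show (X - Y2 : H) = (X - Y1) - (Y2 - Y1) from by abel]
    exact norm_sub_le _ _
  have scalar := ofw_scalar_aux η σ ‖g (t'+1)‖ ‖X - Y2‖ ‖X - Y1‖ ‖Y2 - Y1‖
    hηpos hσpos hσ1 (norm_nonneg _) (norm_nonneg _) (norm_nonneg _) (norm_nonneg _)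
    hq_le hE
  have h6pos : (0:ℝ) ≤ 1/(6*η) := by positivity
  have hB2' := mul_le_mul_of_nonneg_left hB2 h6pos
  have ebridge : ‖g (t'+1)‖*‖X - Y2‖ - ‖Y2 - Y1‖^2/(2*η)
      + (1/(6*η))*((1-2*σ)*‖X - Y2‖^2 + σ^2*‖X - V‖^2 - ‖X - Y1‖^2)
      = (‖g (t'+1)‖*‖X - Y2‖ - ‖Y2 - Y1‖^2/(2*η)
        + ((1-2*σ)*‖X - Y2‖^2 - ‖X - Y1‖^2)/(6*η)) + σ^2/(6*η)*‖X - V‖^2 := by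
    ring
  simp only [Nat.add_sub_cancel]
  rw [hC1, hC2]
  linarith [main1, hD1, hB2', scalar, ebridge]
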